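/- Let N and p be primes with p | N-1, ν = v_p(N-1), and log : (Z/NZ)^× → Z/p^ν Z a surjective homomorphism. Then ∑_{k=1}^{N-1} k·log(k) ≡ 0 (mod p^ν). -/

import Mathlib

open Classical in
/-- The discrete logarithm attached to a homomorphism
`log : (Z/NZ)ˣ → Z/MZ`, extended by `0` to non-units of `Z/NZ`. -/
noncomputable def dlog {N M : ℕ} (log : (ZMod N)ˣ →* Multiplicative (ZMod M))
    (x : ZMod N) : ZMod M :=
  if h : IsUnit x then Multiplicative.toAdd (log h.unit) else 0

lemma dlog_unit {N M : ℕ} (log : (ZMod N)ˣ →* Multiplicative (ZMod M))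
    (u : (ZMod N)ˣ) : dlog log (u : ZMod N) = Multiplicative.toAdd (log u) := by
  rw [dlog, dif_pos u.isUnit]
  congr 2
  exact Units.ext u.isUnit.unit_spec

lemma dlog_one {N M : ℕ} (log : (ZMod N)ˣ →* Multiplicative (ZMod M)) :
    dlog log (1 : ZMod N) = 0 := by
  have := dlog_unit log 1
  simpa using this

lemma dlog_mul {N M : ℕ} (log : (ZMod N)ˣ →* Multiplicative (ZMod M))
    {x y : ZMod N} (hx : IsUnit x) (hy : IsUnit y) :
    dlog log (x * y) = dlog log x + dlog log y := by
  rw [← hx.unit_spec, ← hy.unit_spec, ← Units.val_mul, dlog_unit, dlog_unit, dlog_unit,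
    map_mul, toAdd_mul]

lemma dlog_prod {N M : ℕ} (log : (ZMod N)ˣ →* Multiplicative (ZMod M))
    {ι : Type*} (s : Finset ι) (f : ι → ZMod N) (h : ∀ i ∈ s, IsUnit (f i)) :
    dlog log (∏ i ∈ s, f i) = ∑ i ∈ s, dlog log (f i) := by
  classical
  induction s using Finset.cons_induction with
  | empty => simpa using dlog_one log
  | cons a s ha ih =>
    have hu : ∀ i ∈ s, IsUnit (f i) := fun i hi => h i (Finset.mem_cons_of_mem hi)
    have hprod : IsUnit (∏ i ∈ s, f i) := by
      obtain ⟨g, hg⟩ : ∃ g : ι → (ZMod N)ˣ, ∀ i ∈ s, (g i : ZMod N) = f i := by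
        refine ⟨fun i => if hi : i ∈ s then (hu i hi).unit else 1, fun i hi => by
          simp [hi, (hu i hi).unit_spec]⟩
      have : (((∏ i ∈ s, g i : (ZMod N)ˣ)) : ZMod N) = ∏ i ∈ s, f i :=
        (map_prod (Units.coeHom (ZMod N)) g s).trans (Finset.prod_congr rfl hg)
      exact this ▸ (∏ i ∈ s, g i).isUnit
    rw [Finset.prod_cons, Finset.sum_cons,
      dlog_mul log (h a (Finset.mem_cons_self a s)) hprod, ih hu]

/-- For primes `N, p ≥ 5` with `p ∣ N-1`, `ν = v_p(N-1)`, and a surjective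
homomorphism `log : (Z/NZ)ˣ → Z/p^ν Z`, one has
`∑_{k=1}^{N-1} k·log(k) ≡ 0 (mod p^ν)`. -/
theorem sum_mul_log_eq_zero (p N ν : ℕ) (hp : p.Prime) (hN : N.Prime)
    (hp5 : 5 ≤ p) (hN5 : 5 ≤ N) (hdvd : p ∣ N - 1)
    (hν : ν = (N - 1).factorization p)
    (log : (ZMod N)ˣ →* Multiplicative (ZMod (p ^ ν)))
    (hlog : Function.Surjective log) :
    ∑ k ∈ Finset.Icc 1 (N - 1), (k : ZMod (p ^ ν)) * dlog log (k : ZMod N) = 0 := by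
  haveI : Fact N.Prime := ⟨hN⟩
  haveI : NeZero (p ^ ν) := ⟨pow_ne_zero _ (by omega)⟩
  set A := ZMod (p ^ ν) with hA
  -- p^ν divides N - 1
  have hdvdν : p ^ ν ∣ N - 1 := hν ▸ Nat.ordProj_dvd (N - 1) p
  -- N ≡ 1 mod p^ν
  have hN1 : (N : A) = 1 := by
    have h0 : ((N - 1 : ℕ) : A) = 0 := (ZMod.natCast_eq_zero_iff _ _).mpr hdvdν
    have hN' : N - 1 + 1 = N := by omega
    calc (N : A) = ((N - 1 : ℕ) : A) + 1 := by rw [← Nat.cast_add_one, hN']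
    _ = 1 := by rw [h0, zero_add]
  -- 2 is a unit in A
  have h2 : IsUnit (2 : A) := by
    have : IsUnit ((2 : ℕ) : A) := by
      rw [ZMod.isUnit_iff_coprime]
      exact Nat.Coprime.pow_right _ ((Nat.coprime_primes Nat.prime_two hp).mpr (by omega))
    simpa using this
  obtain ⟨u2, hu2⟩ := h2
  have two_cancel : ∀ x : A, x + x = 0 → x = 0 := by
    intro x hx
    have : (u2 : A) * x = 0 := by rw [hu2]; linear_combination hx
    exact (Units.mul_right_eq_zero u2).mp this
  -- dlog (-1) = 0
  have hm1 : dlog log (-1 : ZMod N) = 0 := by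
    apply two_cancel
    rw [← dlog_mul log isUnit_one.neg isUnit_one.neg]
    simpa using dlog_one log
  -- all k in range are units
  have hunit : ∀ k ∈ Finset.Icc 1 (N - 1), IsUnit ((k : ZMod N)) := by
    intro k hk
    simp only [Finset.mem_Icc] at hk
    have hne : (k : ZMod N) ≠ 0 := by
      rw [Ne, ZMod.natCast_eq_zero_iff]
      intro h
      have := Nat.le_of_dvd (by omega) h
      omega
    exact isUnit_iff_ne_zero.mpr hne
  -- ∑ dlog k = dlog ((N-1)!) = dlog (-1) = 0
  have hsumlog : ∑ k ∈ Finset.Icc 1 (N - 1), dlog log (k : ZMod N) = 0 := by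
    rw [← dlog_prod log _ _ hunit]
    have hIcc : Finset.Icc 1 (N - 1) = Finset.Ico 1 ((N - 1) + 1) := by
      rw [Finset.Ico_add_one_right_eq_Icc]
    have : ∏ k ∈ Finset.Icc 1 (N - 1), (k : ZMod N) = (((N - 1).factorial : ℕ) : ZMod N) := by
      rw [hIcc, ← Nat.cast_prod, Finset.prod_Ico_id_eq_factorial]
    rw [this, ZMod.wilsons_lemma, hm1]
  -- reindex k ↦ N - k
  have hre : ∑ k ∈ Finset.Icc 1 (N - 1), (k : A) * dlog log (k : ZMod N)
      = ∑ k ∈ Finset.Icc 1 (N - 1), ((N - k : ℕ) : A) * dlog log ((N - k : ℕ) : ZMod N) := by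
    apply Finset.sum_nbij' (i := fun k => N - k) (j := fun k => N - k) <;>
      intro a ha <;> simp only [Finset.mem_Icc] at * <;> try omega
    congr 2 <;> congr 1 <;> omega
  have hterm : ∀ k ∈ Finset.Icc 1 (N - 1),
      ((N - k : ℕ) : A) * dlog log ((N - k : ℕ) : ZMod N)
        = (1 - (k : A)) * dlog log (k : ZMod N) := by
    intro k hk
    have hk' := Finset.mem_Icc.mp hk
    have h1 : ((N - k : ℕ) : A) = 1 - (k : A) := by
      rw [Nat.cast_sub (by omega), hN1]
    have h2' : ((N - k : ℕ) : ZMod N) = -(k : ZMod N) := by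
      rw [Nat.cast_sub (by omega), ZMod.natCast_self, zero_sub]
    have h3 : dlog log (-(k : ZMod N)) = dlog log (k : ZMod N) := by
      rw [show -(k : ZMod N) = (-1) * (k : ZMod N) by ring,
        dlog_mul log isUnit_one.neg (hunit k hk), hm1, zero_add]
    rw [h1, h2', h3]
  rw [Finset.sum_congr rfl hterm] at hre
  apply two_cancel
  calc (∑ k ∈ Finset.Icc 1 (N - 1), (k : A) * dlog log (k : ZMod N))
      + ∑ k ∈ Finset.Icc 1 (N - 1), (k : A) * dlog log (k : ZMod N)
      = (∑ k ∈ Finset.Icc 1 (N - 1), (1 - (k : A)) * dlog log (k : ZMod N))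
      + ∑ k ∈ Finset.Icc 1 (N - 1), (k : A) * dlog log (k : ZMod N) := by rw [← hre]
    _ = ∑ k ∈ Finset.Icc 1 (N - 1), dlog log (k : ZMod N) := by
        rw [← Finset.sum_add_distrib]
        apply Finset.sum_congr rfl
        intro k _
        ring
    _ = 0 := hsumlog
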